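/- Let w₁ᵉ, ..., wₙᵉ be real-valued functions of ε on (0, β) with finite limits Mᵢ = lim_{ε→0⁺} wᵢᵉ, let 𝔐 = max Mᵢ and ℑ = {i : Mᵢ = 𝔐}. Assume for each i ∈ ℑ the limit μᵢ = lim_{ε→0⁺} (wᵢᵉ − 𝔐)/ε exists and is finite, and that D = ∑_{i∈ℑ} γᵢ e^{μᵢ} ≠ 0, where γᵢ are nonzero real constants. Then τ(ε) = ∑ᵢ γᵢ e^(wᵢᵉ/ε) is nonzero for all sufficiently small ε > 0, and lim_{ε→0⁺} ε·ln|τ(ε)| = 𝔐. -/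

import Mathlib

open Filter Real Finset
open Topology

theorem stmt_3 (n : ℕ) (w : Fin (n + 1) → ℝ → ℝ) (M : Fin (n + 1) → ℝ)
    (hM : ∀ i, Tendsto (w i) (nhdsWithin 0 (Set.Ioi 0)) (nhds (M i)))
    (γ : Fin (n + 1) → ℝ) (hγ : ∀ i, γ i ≠ 0)
    (𝔐 : ℝ) (h𝔐 : 𝔐 = Finset.univ.sup' Finset.univ_nonempty M)
    (μ : Fin (n + 1) → ℝ)
    (hμ : ∀ i, M i = 𝔐 →
      Tendsto (fun ε : ℝ => (w i ε - 𝔐) / ε) (nhdsWithin 0 (Set.Ioi 0)) (nhds (μ i)))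
    (hD : ∑ i ∈ Finset.univ.filter (fun i => M i = 𝔐), γ i * Real.exp (μ i) ≠ 0) :
    (∀ᶠ ε in nhdsWithin (0 : ℝ) (Set.Ioi 0), ∑ i, γ i * Real.exp (w i ε / ε) ≠ 0) ∧
    Tendsto (fun ε : ℝ => ε * Real.log |∑ i, γ i * Real.exp (w i ε / ε)|)
      (nhdsWithin 0 (Set.Ioi 0)) (nhds 𝔐) := by
  set l := nhdsWithin (0 : ℝ) (Set.Ioi 0) with hl
  have hεpos : ∀ᶠ ε in l, ε ∈ Set.Ioi (0 : ℝ) := eventually_mem_nhdsWithin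
  set S : ℝ → ℝ := fun ε => ∑ i, γ i * Real.exp ((w i ε - 𝔐) / ε) with hSdef
  set D : ℝ := ∑ i ∈ Finset.univ.filter (fun i => M i = 𝔐), γ i * Real.exp (μ i) with hDdef
  have hle : ∀ i, M i ≤ 𝔐 := by
    intro i; rw [h𝔐]; exact Finset.le_sup' M (Finset.mem_univ i)
  have hS : Tendsto S l (𝓝 D) := by
    have hDeq : D = ∑ i, (if M i = 𝔐 then γ i * Real.exp (μ i) else 0) := by
      rw [hDdef, Finset.sum_filter]
    rw [hDeq]
    apply tendsto_finset_sum
    intro i _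
    by_cases hi : M i = 𝔐
    · simp only [if_pos hi]
      exact ((Real.continuous_exp.tendsto _).comp (hμ i hi)).const_mul _
    · simp only [if_neg hi]
      have h1 : Tendsto (fun ε => w i ε - 𝔐) l (𝓝 (M i - 𝔐)) := (hM i).sub_const 𝔐
      have h2 : Tendsto (fun ε : ℝ => ε⁻¹) l atTop := tendsto_inv_nhdsGT_zero
      have hneg : M i - 𝔐 < 0 := sub_neg.2 (lt_of_le_of_ne (hle i) hi)
      have h3 : Tendsto (fun ε => (w i ε - 𝔐) / ε) l atBot := by
        simpa [div_eq_mul_inv] using h1.neg_mul_atTop hneg h2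
      have h4 : Tendsto (fun ε => Real.exp ((w i ε - 𝔐) / ε)) l (𝓝 0) :=
        Real.tendsto_exp_atBot.comp h3
      simpa using h4.const_mul (γ i)
  have hSne : ∀ᶠ ε in l, S ε ≠ 0 := hS.eventually_ne hD
  have hτS : ∀ᶠ ε in l, ∑ i, γ i * Real.exp (w i ε / ε) = Real.exp (𝔐 / ε) * S ε := by
    filter_upwards [hεpos] with ε hε
    have hε0 : ε ≠ 0 := ne_of_gt hε
    rw [hSdef]
    rw [Finset.mul_sum]
    apply Finset.sum_congr rfl
    intro i _
    rw [← mul_assoc, mul_comm (Real.exp _) (γ i), mul_assoc, ← Real.exp_add]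
    congr 1
    field_simp
    ring_nf
  constructor
  · filter_upwards [hτS, hSne] with ε h1 h2
    rw [h1]
    exact mul_ne_zero (Real.exp_ne_zero _) h2
  · have heq : ∀ᶠ ε in l,
        𝔐 + ε * Real.log |S ε| = ε * Real.log |∑ i, γ i * Real.exp (w i ε / ε)| := by
      filter_upwards [hτS, hSne, hεpos] with ε h1 h2 hε
      rw [h1, abs_mul, abs_of_pos (Real.exp_pos _),
        Real.log_mul (Real.exp_ne_zero _) (abs_ne_zero.2 h2), Real.log_exp, mul_add,
        mul_div_cancel₀ _ (ne_of_gt hε)]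
    rw [← tendsto_congr' heq]
    have hlog : Tendsto (fun ε => ε * Real.log |S ε|) l (𝓝 0) := by
      have habs : Tendsto (fun ε => |S ε|) l (𝓝 |D|) :=
        (continuous_abs.tendsto D).comp hS
      have hlg : Tendsto (fun ε => Real.log |S ε|) l (𝓝 (Real.log |D|)) :=
        (Real.continuousAt_log (abs_ne_zero.2 hD)).tendsto.comp habs
      have hε0 : Tendsto (fun ε : ℝ => ε) l (𝓝 0) :=
        tendsto_id.mono_left nhdsWithin_le_nhds
      simpa using hε0.mul hlg
    simpa using tendsto_const_nhds.add hlog
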